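/- Under the Arnoldi relation A V_m = V_m H_m + h_{m+1,m} v_{m+1} e_m^T with V_m^T V_m = I and v₁ the first column of V_m, for every monic polynomial s_m of exact degree m one has ∏_{i=1}^m h_{i+1,i} ≤ ‖s_m(A) v₁‖. -/

import Mathlib

open Matrix

private lemma sum_mulVec' {m k R : Type*} [Fintype k] [NonUnitalNonAssocSemiring R]
    {ι : Type*} (s : Finset ι) (M : ι → Matrix m k R) (v : k → R) :
    (∑ i ∈ s, M i).mulVec v = ∑ i ∈ s, (M i).mulVec v := by
  funext j
  simp only [Matrix.mulVec, dotProduct, Finset.sum_apply, Matrix.sum_apply,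
    Finset.sum_mul]
  rw [Finset.sum_comm]

private lemma vecMulVec_single_mulVec {m k : Type*} [Fintype k] [DecidableEq k]
    (u : m → ℝ) (j : k) (x : k → ℝ) :
    (Matrix.vecMulVec u (Pi.single j 1)).mulVec x = x j • u := by
  funext i
  show ∑ l, Matrix.vecMulVec u (Pi.single j (1:ℝ)) i l * x l = x j * u i
  simp only [Matrix.vecMulVec_apply, Pi.single_apply, mul_ite, mul_one, mul_zero, ite_mul,
    zero_mul]
  rw [Finset.sum_ite_eq' Finset.univ j (fun l => u i * x l)]
  simp [mul_comm]

private lemma mulVec_sum' {m k R : Type*} [Fintype k] [NonUnitalNonAssocSemiring R]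
    {ι : Type*} (s : Finset ι) (M : Matrix m k R) (v : ι → k → R) :
    M.mulVec (∑ i ∈ s, v i) = ∑ i ∈ s, M.mulVec (v i) := by
  funext j
  simp only [Matrix.mulVec, dotProduct, Finset.sum_apply, Finset.mul_sum]
  rw [Finset.sum_comm]

/-- under the Arnoldi relation, for every monic polynomial `s` of exact
degree `m` one has `∏_{i=1}^m h_{i+1,i} ≤ ‖s(A) v₁‖`. -/
theorem stmt9 {N n : ℕ} (A : Matrix (Fin N) (Fin N) ℝ)
    (V : Matrix (Fin N) (Fin (n + 1)) ℝ) (Hm : Matrix (Fin (n + 1)) (Fin (n + 1)) ℝ)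
    (vnext : Fin N → ℝ) (h : ℝ)
    (horth : Vᵀ * V = 1)
    (hvnorm : vnext ⬝ᵥ vnext = 1)
    (hvorth : Vᵀ.mulVec vnext = 0)
    (hHess : ∀ i j : Fin (n + 1), (j : ℕ) + 1 < (i : ℕ) → Hm i j = 0)
    (hsub : ∀ i : Fin n, 0 < Hm i.succ i.castSucc) (hpos : 0 < h)
    (harnoldi : A * V = V * Hm + h • Matrix.vecMulVec vnext (Pi.single (Fin.last n) 1))
    (s : Polynomial ℝ) (hmonic : s.Monic) (hdeg : s.natDegree = n + 1) :
    (∏ i : Fin n, Hm i.succ i.castSucc) * h ≤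
      ‖(WithLp.equiv 2 (Fin N → ℝ)).symm
        ((Polynomial.aeval A s).mulVec (fun i => V i 0))‖ := by
  classical
  set e0 : Fin (n + 1) → ℝ := Pi.single 0 1 with he0
  set v1 : Fin N → ℝ := fun i => V i 0 with hv1
  set F : ℕ → ℝ := fun i =>
    if hi : i < n then Hm ⟨i + 1, by omega⟩ ⟨i, by omega⟩ else 0 with hF
  -- support lemma
  have supp : ∀ k : ℕ, ∀ i : Fin (n + 1), k < (i : ℕ) → ((Hm ^ k).mulVec e0) i = 0 := by
    intro k
    induction k with
    | zero =>
      intro i hi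
      rw [pow_zero, Matrix.one_mulVec]
      exact Pi.single_eq_of_ne (by rintro rfl; simp at hi) 1
    | succ k ih =>
      intro i hi
      rw [pow_succ', ← Matrix.mulVec_mulVec]
      show ∑ j, Hm i j * ((Hm ^ k).mulVec e0) j = 0
      apply Finset.sum_eq_zero
      intro j _
      rcases lt_or_ge (k : ℕ) (j : ℕ) with hj | hj
      · rw [ih j hj, mul_zero]
      · rw [hHess i j (by omega), zero_mul]
  -- diagonal entry lemma
  have diag : ∀ k : ℕ, ∀ _ : k ≤ n,
      ((Hm ^ k).mulVec e0) ⟨k, by omega⟩ = ∏ i ∈ Finset.range k, F i := by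
    intro k
    induction k with
    | zero =>
      intro _
      simp [he0]
    | succ k ih =>
      intro hk
      rw [pow_succ', ← Matrix.mulVec_mulVec]
      show ∑ j, Hm ⟨k + 1, by omega⟩ j * ((Hm ^ k).mulVec e0) j
          = ∏ i ∈ Finset.range (k + 1), F i
      rw [Finset.sum_eq_single (⟨k, by omega⟩ : Fin (n + 1))]
      · rw [ih (by omega), Finset.prod_range_succ, mul_comm]
        congr 1
        simp only [hF, dif_pos (show k < n by omega)]
      · intro j _ hj
        rcases lt_or_ge (k : ℕ) (j : ℕ) with hlt | hle
        · rw [supp k j hlt, mul_zero]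
        · have hjk : (j : ℕ) < k := by
            rcases lt_or_eq_of_le hle with h' | h'
            · exact h'
            · exact absurd (Fin.ext h') hj
          rw [hHess _ j (show (j : ℕ) + 1 < k + 1 by omega), zero_mul]
      · intro hmem
        exact absurd (Finset.mem_univ _) hmem
  -- monomial lemma
  have mono : ∀ k : ℕ, k ≤ n → (A ^ k).mulVec v1 = V.mulVec ((Hm ^ k).mulVec e0) := by
    intro k
    induction k with
    | zero =>
      intro _
      funext i
      rw [pow_zero, pow_zero, Matrix.one_mulVec, Matrix.one_mulVec]
      show v1 i = ∑ j, V i j * e0 j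
      simp [he0, hv1, Pi.single_apply, mul_ite]
    | succ k ih =>
      intro hk
      have hxlast : ((Hm ^ k).mulVec e0) (Fin.last n) = 0 :=
        supp k (Fin.last n) (by simp only [Fin.val_last]; omega)
      rw [pow_succ', ← Matrix.mulVec_mulVec, ih (by omega), Matrix.mulVec_mulVec,
        harnoldi, Matrix.add_mulVec, ← Matrix.mulVec_mulVec, Matrix.smul_mulVec,
        vecMulVec_single_mulVec, hxlast, zero_smul, smul_zero, add_zero,
        pow_succ' Hm k, ← Matrix.mulVec_mulVec]
  -- polynomial lemma for degree ≤ n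
  have poly : ∀ p : Polynomial ℝ, p.natDegree ≤ n →
      (Polynomial.aeval A p).mulVec v1 = V.mulVec ((Polynomial.aeval Hm p).mulVec e0) := by
    intro p hp
    rw [Polynomial.aeval_eq_sum_range' (show p.natDegree < n + 1 by omega) A,
      Polynomial.aeval_eq_sum_range' (show p.natDegree < n + 1 by omega) Hm,
      sum_mulVec', sum_mulVec', mulVec_sum']
    apply Finset.sum_congr rfl
    intro i hi
    have hi' : i ≤ n := by
      simp only [Finset.mem_range] at hi; omega
    rw [Matrix.smul_mulVec, Matrix.smul_mulVec, mono i hi',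
      Matrix.mulVec_smul]
  -- decompose s
  set P : ℝ := ∏ i ∈ Finset.range n, F i with hP
  set r : Polynomial ℝ := s - Polynomial.X ^ (n + 1) with hr
  have hs0 : s ≠ 0 := hmonic.ne_zero
  have hrdeg : r.natDegree ≤ n := by
    by_cases hr0 : r = 0
    · simp [hr0]
    · have hdlt : r.degree < ((n + 1 : ℕ) : WithBot ℕ) := by
        have := Polynomial.degree_sub_lt
          (by rw [Polynomial.degree_X_pow, Polynomial.degree_eq_natDegree hs0, hdeg])
          hs0
          (by rw [Polynomial.leadingCoeff_X_pow]; exact hmonic)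
        rwa [Polynomial.degree_eq_natDegree hs0, hdeg] at this
      have := (Polynomial.natDegree_lt_iff_degree_lt hr0).mpr hdlt
      omega
  have hssum : s = Polynomial.X ^ (n + 1) + r := by rw [hr]; ring
  -- the key decomposition of s(A) v1
  have hAn1 : (A ^ (n + 1)).mulVec v1 =
      V.mulVec ((Hm ^ (n + 1)).mulVec e0) + (h * P) • vnext := by
    have hxlast : ((Hm ^ n).mulVec e0) (Fin.last n) = P := diag n le_rfl
    rw [pow_succ', ← Matrix.mulVec_mulVec, mono n le_rfl, Matrix.mulVec_mulVec,
      harnoldi, Matrix.add_mulVec, ← Matrix.mulVec_mulVec, Matrix.smul_mulVec,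
      vecMulVec_single_mulVec, hxlast, smul_smul, pow_succ' Hm n,
      ← Matrix.mulVec_mulVec]
  set y : Fin N → ℝ := (Polynomial.aeval A s).mulVec v1 with hy
  set u : Fin (n + 1) → ℝ :=
    (Hm ^ (n + 1)).mulVec e0 + (Polynomial.aeval Hm r).mulVec e0 with hu
  have hydec : y = V.mulVec u + (h * P) • vnext := by
    rw [hy, hssum, map_add, Matrix.add_mulVec, map_pow, Polynomial.aeval_X,
      hAn1, poly r hrdeg, hu, Matrix.mulVec_add]
    abel
  -- inner product with vnext
  have hdot : y ⬝ᵥ vnext = h * P := by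
    rw [hydec, add_dotProduct, smul_dotProduct, hvnorm,
      dotProduct_comm, dotProduct_mulVec,
      ← Matrix.mulVec_transpose, hvorth, zero_dotProduct]
    simp
  -- norms
  set x : EuclideanSpace ℝ (Fin N) := (WithLp.equiv 2 (Fin N → ℝ)).symm y with hx
  set w : EuclideanSpace ℝ (Fin N) := (WithLp.equiv 2 (Fin N → ℝ)).symm vnext with hw
  have hinner : (inner ℝ x w : ℝ) = h * P := by
    rw [← hdot]
    simp only [hx, hw, PiLp.inner_apply, RCLike.inner_apply, starRingEnd_apply, star_trivial,
      WithLp.equiv_symm_apply, WithLp.ofLp_toLp, dotProduct]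
    exact Finset.sum_congr rfl (fun i _ => mul_comm _ _)
  have hwnorm : ‖w‖ = 1 := by
    rw [EuclideanSpace.norm_eq]
    have h1 : ∑ i, ‖w i‖ ^ 2 = vnext ⬝ᵥ vnext := by
      simp only [hw, WithLp.equiv_symm_apply, WithLp.ofLp_toLp, Real.norm_eq_abs, sq_abs,
        dotProduct, sq, abs_mul_abs_self]
    rw [h1, hvnorm, Real.sqrt_one]
  have hPeq : (∏ i : Fin n, Hm i.succ i.castSucc) = P := by
    rw [hP, ← Fin.prod_univ_eq_prod_range F n]
    apply Finset.prod_congr rfl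
    intro i _
    simp only [hF, dif_pos i.isLt]
    rfl
  calc (∏ i : Fin n, Hm i.succ i.castSucc) * h = h * P := by rw [hPeq]; ring
    _ = (inner ℝ x w : ℝ) := hinner.symm
    _ ≤ ‖x‖ * ‖w‖ := real_inner_le_norm x w
    _ = ‖x‖ := by rw [hwnorm, mul_one]
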